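/- Let τ, γ, λ > 0, U ∈ ℝ^{p×n}, V ∈ ℝ^{p×m}, and define Ψ(W) := (τ/2)‖U − VW‖² + (γ/2)‖W‖² for W ∈ ℝ^{m×n}. Let β ∈ (0, 1/(τ‖V‖₂² + γ)) and let {W^ℓ}_{ℓ≥0} be any sequence satisfying W^{ℓ+1} ∈ Prox_{βλ‖·‖_{0,2}}(W^ℓ − β∇Ψ(W^ℓ)) for all ℓ. Then the whole sequence {W^ℓ} converges to some W* ∈ ℝ^{m×n} satisfying W* ∈ Prox_{βλ‖·‖_{0,2}}(W* − β∇Ψ(W*)) (a P-stationary point of min_W Ψ(W) + λ‖W‖_{0,2}). -/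

import Mathlib

set_option autoImplicit false

open Matrix

/-- Squared Frobenius norm of a matrix. -/
noncomputable def frobSq {m n : ℕ} (W : Matrix (Fin m) (Fin n) ℝ) : ℝ :=
  ∑ i, ∑ j, (W i j) ^ 2

/-- Frobenius norm of a matrix. -/
noncomputable def frobNorm {m n : ℕ} (W : Matrix (Fin m) (Fin n) ℝ) : ℝ :=
  Real.sqrt (frobSq W)

open Classical in
/-- `‖W‖_{0,2}`: the number of nonzero rows of `W`, as a real number. -/
noncomputable def norm02 {m n : ℕ} (W : Matrix (Fin m) (Fin n) ℝ) : ℝ :=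
  ((Finset.univ.filter fun s : Fin m => W s ≠ 0).card : ℝ)

/-- The proximal operator (as a set of global minimizers):
`Prox_β G (H) = argmin_W { G(W) + (1/(2β))‖W − H‖² }`. -/
def ProxSet {m n : ℕ} (β : ℝ) (G : Matrix (Fin m) (Fin n) ℝ → ℝ)
    (H : Matrix (Fin m) (Fin n) ℝ) : Set (Matrix (Fin m) (Fin n) ℝ) :=
  {W | ∀ Z : Matrix (Fin m) (Fin n) ℝ,
    G W + (1 / (2 * β)) * frobSq (W - H) ≤ G Z + (1 / (2 * β)) * frobSq (Z - H)}

/-- The objective `Ψ(W) = (τ/2)‖U − VW‖² + (γ/2)‖W‖²`. -/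
noncomputable def Psi {p m n : ℕ} (τ γ : ℝ) (U : Matrix (Fin p) (Fin n) ℝ)
    (V : Matrix (Fin p) (Fin m) ℝ) (W : Matrix (Fin m) (Fin n) ℝ) : ℝ :=
  (τ / 2) * frobSq (U - V * W) + (γ / 2) * frobSq W

/-- The gradient of `Ψ`, namely `∇Ψ(W) = τ Vᵀ(VW − U) + γ W`. -/
noncomputable def gradPsi {p m n : ℕ} (τ γ : ℝ) (U : Matrix (Fin p) (Fin n) ℝ)
    (V : Matrix (Fin p) (Fin m) ℝ) (W : Matrix (Fin m) (Fin n) ℝ) :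
    Matrix (Fin m) (Fin n) ℝ :=
  τ • (Vᵀ * (V * W - U)) + γ • W

/-- The spectral norm `‖V‖₂` of a matrix (largest singular value): the operator norm
of the induced linear map between Euclidean spaces. -/
noncomputable def specNorm {p m : ℕ} (V : Matrix (Fin p) (Fin m) ℝ) : ℝ :=
  ‖LinearMap.toContinuousLinearMap (Matrix.toEuclideanLin V)‖

open Filter Topology

namespace PGMaux

variable {p m n : ℕ}

/-! ### Inner product and Frobenius norm basics -/

noncomputable def ip (X Y : Matrix (Fin m) (Fin n) ℝ) : ℝ := ∑ i, ∑ j, X i j * Y i j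

lemma frobSq_eq_ip (X : Matrix (Fin m) (Fin n) ℝ) : frobSq X = ip X X := by
  simp [frobSq, ip, sq]

lemma frobSq_nonneg (X : Matrix (Fin m) (Fin n) ℝ) : 0 ≤ frobSq X :=
  Finset.sum_nonneg fun i _ => Finset.sum_nonneg fun j _ => sq_nonneg _

lemma ip_comm (X Y : Matrix (Fin m) (Fin n) ℝ) : ip X Y = ip Y X := by
  simp [ip, mul_comm]

lemma ip_add_left (X Y Z : Matrix (Fin m) (Fin n) ℝ) : ip (X + Y) Z = ip X Z + ip Y Z := by
  simp [ip, Matrix.add_apply, add_mul, Finset.sum_add_distrib]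

lemma ip_sub_left (X Y Z : Matrix (Fin m) (Fin n) ℝ) : ip (X - Y) Z = ip X Z - ip Y Z := by
  simp [ip, Matrix.sub_apply, sub_mul, Finset.sum_sub_distrib]

lemma ip_smul_left (c : ℝ) (X Z : Matrix (Fin m) (Fin n) ℝ) : ip (c • X) Z = c * ip X Z := by
  simp [ip, Matrix.smul_apply, Finset.mul_sum, mul_assoc]

lemma ip_smul_right (c : ℝ) (X Z : Matrix (Fin m) (Fin n) ℝ) : ip X (c • Z) = c * ip X Z := by
  rw [ip_comm, ip_smul_left, ip_comm]

lemma ip_add_right (X Y Z : Matrix (Fin m) (Fin n) ℝ) : ip X (Y + Z) = ip X Y + ip X Z := by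
  rw [ip_comm, ip_add_left, ip_comm X Y, ip_comm X Z]

lemma ip_sub_right (X Y Z : Matrix (Fin m) (Fin n) ℝ) : ip X (Y - Z) = ip X Y - ip X Z := by
  rw [ip_comm, ip_sub_left, ip_comm X Y, ip_comm X Z]

lemma frobSq_sub (X Y : Matrix (Fin m) (Fin n) ℝ) :
    frobSq (X - Y) = frobSq X - 2 * ip X Y + frobSq Y := by
  simp only [frobSq_eq_ip, ip_sub_left, ip_sub_right]
  rw [ip_comm Y X]; ring

lemma frobSq_add (X Y : Matrix (Fin m) (Fin n) ℝ) :
    frobSq (X + Y) = frobSq X + 2 * ip X Y + frobSq Y := by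
  simp only [frobSq_eq_ip, ip_add_left, ip_add_right]
  rw [ip_comm Y X]; ring

lemma frobSq_smul (c : ℝ) (X : Matrix (Fin m) (Fin n) ℝ) :
    frobSq (c • X) = c ^ 2 * frobSq X := by
  simp only [frobSq_eq_ip, ip_smul_left, ip_smul_right]; ring

lemma sum3 {a b c : ℕ} (f : Fin a → Fin b → Fin c → ℝ) :
    ∑ x, ∑ y, ∑ z, f x y z = ∑ z, ∑ y, ∑ x, f x y z := by
  calc ∑ x, ∑ y, ∑ z, f x y z
      = ∑ y, ∑ x, ∑ z, f x y z := Finset.sum_comm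
    _ = ∑ y, ∑ z, ∑ x, f x y z := Finset.sum_congr rfl fun y _ => Finset.sum_comm
    _ = ∑ z, ∑ y, ∑ x, f x y z := Finset.sum_comm

lemma ip_transpose_mul (V : Matrix (Fin p) (Fin m) ℝ) (M : Matrix (Fin p) (Fin n) ℝ)
    (N : Matrix (Fin m) (Fin n) ℝ) : ip (Vᵀ * M) N = ip M (V * N) := by
  simp only [ip, Matrix.mul_apply, Matrix.transpose_apply, Finset.sum_mul, Finset.mul_sum]
  rw [sum3]
  exact Finset.sum_congr rfl fun i _ => Finset.sum_congr rfl fun j _ =>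
    Finset.sum_congr rfl fun k _ => by ring

/-! ### Spectral norm bounds -/

lemma specNorm_nonneg (V : Matrix (Fin p) (Fin m) ℝ) : 0 ≤ specNorm V := norm_nonneg _

lemma mulVec_sq_le (V : Matrix (Fin p) (Fin m) ℝ) (y : Fin m → ℝ) :
    ∑ i, (V.mulVec y i) ^ 2 ≤ specNorm V ^ 2 * ∑ k, (y k) ^ 2 := by
  set x : EuclideanSpace ℝ (Fin m) := (WithLp.equiv 2 (Fin m → ℝ)).symm y with hx
  have h := (LinearMap.toContinuousLinearMap (Matrix.toEuclideanLin V)).le_opNorm x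
  rw [LinearMap.coe_toContinuousLinearMap'] at h
  rw [show (Matrix.toEuclideanLin V) x = (WithLp.equiv 2 (Fin p → ℝ)).symm (V.mulVec y) from rfl] at h
  have hn1 : ‖(WithLp.equiv 2 (Fin p → ℝ)).symm (V.mulVec y)‖
      = Real.sqrt (∑ i, (V.mulVec y i) ^ 2) := by
    rw [EuclideanSpace.norm_eq]
    congr 1
    exact Finset.sum_congr rfl fun i _ => by simp [sq_abs]
  have hn2 : ‖x‖ = Real.sqrt (∑ k, (y k) ^ 2) := by
    rw [hx, EuclideanSpace.norm_eq]
    congr 1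
    exact Finset.sum_congr rfl fun i _ => by simp [sq_abs]
  rw [hn1, hn2] at h
  have h1 : (0:ℝ) ≤ ∑ i, (V.mulVec y i) ^ 2 := Finset.sum_nonneg fun _ _ => sq_nonneg _
  have h2 : (0:ℝ) ≤ ∑ k, (y k) ^ 2 := Finset.sum_nonneg fun _ _ => sq_nonneg _
  calc ∑ i, (V.mulVec y i) ^ 2 = (Real.sqrt (∑ i, (V.mulVec y i) ^ 2)) ^ 2 :=
        (Real.sq_sqrt h1).symm
    _ ≤ (specNorm V * Real.sqrt (∑ k, (y k) ^ 2)) ^ 2 :=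
        pow_le_pow_left₀ (Real.sqrt_nonneg _) h 2
    _ = specNorm V ^ 2 * ∑ k, (y k) ^ 2 := by rw [mul_pow, Real.sq_sqrt h2]

lemma transpose_mulVec_sq_le (V : Matrix (Fin p) (Fin m) ℝ) (y : Fin p → ℝ) :
    ∑ k, (Vᵀ.mulVec y k) ^ 2 ≤ specNorm V ^ 2 * ∑ i, (y i) ^ 2 := by
  have key : ∀ w : Fin m → ℝ, ∑ i, V.mulVec w i * y i = ∑ k, w k * Vᵀ.mulVec y k := by
    intro w
    simp only [Matrix.mulVec, dotProduct, Matrix.transpose_apply,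
      Finset.sum_mul, Finset.mul_sum]
    rw [Finset.sum_comm]
    exact Finset.sum_congr rfl fun k _ => Finset.sum_congr rfl fun i _ => by ring
  set z : Fin m → ℝ := Vᵀ.mulVec y with hz
  have key2 : ∑ k, (z k) ^ 2 = ∑ i, V.mulVec z i * y i := by
    rw [key z]; exact Finset.sum_congr rfl fun k _ => (sq (z k)) ▸ rfl
  have cs := Finset.sum_mul_sq_le_sq_mul_sq Finset.univ (fun i => V.mulVec z i) y
  have hV := mulVec_sq_le V z
  have hy : (0:ℝ) ≤ ∑ i, (y i)^2 := Finset.sum_nonneg fun _ _ => sq_nonneg _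
  have hznn : (0:ℝ) ≤ ∑ k, (z k)^2 := Finset.sum_nonneg fun _ _ => sq_nonneg _
  rcases eq_or_lt_of_le hznn with h0 | h0
  · rw [← h0]; positivity
  · have h1 : (∑ k, (z k)^2)^2 ≤ (specNorm V ^2 * ∑ i, (y i)^2) * (∑ k, (z k)^2) := by
      calc (∑ k, (z k)^2)^2 = (∑ i, V.mulVec z i * y i)^2 := by rw [key2]
        _ ≤ (∑ i, (V.mulVec z i)^2) * ∑ i, (y i)^2 := cs
        _ ≤ (specNorm V ^2 * ∑ k, (z k)^2) * ∑ i, (y i)^2 := mul_le_mul_of_nonneg_right hV hy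
        _ = (specNorm V ^2 * ∑ i, (y i)^2) * (∑ k, (z k)^2) := by ring
    exact le_of_mul_le_mul_right
      (by nlinarith : (∑ k, (z k)^2) * (∑ k, (z k)^2)
        ≤ (specNorm V ^2 * ∑ i, (y i)^2) * (∑ k, (z k)^2)) h0

lemma frobSq_mul_le (V : Matrix (Fin p) (Fin m) ℝ) (M : Matrix (Fin m) (Fin n) ℝ) :
    frobSq (V * M) ≤ specNorm V ^ 2 * frobSq M := by
  calc frobSq (V * M) = ∑ j, ∑ i, (V.mulVec (fun k => M k j) i) ^ 2 := by
        rw [frobSq, Finset.sum_comm]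
        exact Finset.sum_congr rfl fun j _ => Finset.sum_congr rfl fun i _ => by
          rw [Matrix.mul_apply, Matrix.mulVec, dotProduct]
    _ ≤ ∑ j, specNorm V ^ 2 * ∑ k, (M k j) ^ 2 :=
        Finset.sum_le_sum fun j _ => mulVec_sq_le V _
    _ = specNorm V ^ 2 * frobSq M := by
        rw [← Finset.mul_sum, frobSq]
        congr 1
        exact Finset.sum_comm

lemma frobSq_transpose_mul_le (V : Matrix (Fin p) (Fin m) ℝ) (M : Matrix (Fin p) (Fin n) ℝ) :
    frobSq (Vᵀ * M) ≤ specNorm V ^ 2 * frobSq M := by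
  calc frobSq (Vᵀ * M) = ∑ j, ∑ i, (Vᵀ.mulVec (fun k => M k j) i) ^ 2 := by
        rw [frobSq, Finset.sum_comm]
        exact Finset.sum_congr rfl fun j _ => Finset.sum_congr rfl fun i _ => by
          rw [Matrix.mul_apply, Matrix.mulVec, dotProduct]
    _ ≤ ∑ j, specNorm V ^ 2 * ∑ k, (M k j) ^ 2 :=
        Finset.sum_le_sum fun j _ => transpose_mulVec_sq_le V _
    _ = specNorm V ^ 2 * frobSq M := by
        rw [← Finset.mul_sum, frobSq]
        congr 1
        exact Finset.sum_comm

/-! ### Quadratic structure of Psi -/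

lemma psi_expand (τ γ : ℝ) (U : Matrix (Fin p) (Fin n) ℝ) (V : Matrix (Fin p) (Fin m) ℝ)
    (X D : Matrix (Fin m) (Fin n) ℝ) :
    Psi τ γ U V (X + D) = Psi τ γ U V X + ip (gradPsi τ γ U V X) D
      + (1/2) * (τ * frobSq (V * D) + γ * frobSq D) := by
  have e1 : U - V * (X + D) = (U - V * X) - V * D := by
    rw [Matrix.mul_add]; exact sub_add_eq_sub_sub U (V * X) (V * D)
  have e2 : ip (gradPsi τ γ U V X) D
      = τ * (ip (V * X) (V * D) - ip U (V * D)) + γ * ip X D := by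
    rw [gradPsi, ip_add_left, ip_smul_left, ip_smul_left, ip_transpose_mul, ip_sub_left]
  rw [Psi, Psi, e1, frobSq_sub, frobSq_add, e2, ip_sub_left]
  ring

lemma grad_sub (τ γ : ℝ) (U : Matrix (Fin p) (Fin n) ℝ) (V : Matrix (Fin p) (Fin m) ℝ)
    (X Y : Matrix (Fin m) (Fin n) ℝ) :
    gradPsi τ γ U V X - gradPsi τ γ U V Y = τ • (Vᵀ * (V * (X - Y))) + γ • (X - Y) := by
  simp only [gradPsi, Matrix.mul_sub, smul_sub]
  abel

lemma contraction (τ γ β : ℝ) (hτ : 0 < τ) (hγ : 0 < γ) (hβ0 : 0 < β)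
    (V : Matrix (Fin p) (Fin m) ℝ)
    (hβL : β * (τ * specNorm V ^ 2 + γ) < 1) (D : Matrix (Fin m) (Fin n) ℝ) :
    frobSq (D - β • (τ • (Vᵀ * (V * D)) + γ • D))
      ≤ (1 - β * γ * (2 - β * (τ * specNorm V ^ 2 + γ))) * frobSq D := by
  set s := specNorm V with hs
  set A : Matrix (Fin m) (Fin n) ℝ := τ • (Vᵀ * (V * D)) + γ • D with hA
  have e1 : frobSq (D - β • A) = frobSq D - 2 * (β * ip D A) + β ^ 2 * frobSq A := by
    rw [frobSq_sub, ip_smul_right, frobSq_smul]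
  have e2 : ip D A = τ * frobSq (V * D) + γ * frobSq D := by
    rw [hA, ip_add_right, ip_smul_right, ip_smul_right, ← frobSq_eq_ip]
    congr 2
    rw [ip_comm, ip_transpose_mul, frobSq_eq_ip]
  have e3 : frobSq A = τ ^ 2 * frobSq (Vᵀ * (V * D)) + 2 * (τ * γ * ip (Vᵀ * (V * D)) D)
      + γ ^ 2 * frobSq D := by
    rw [hA, frobSq_add, frobSq_smul, frobSq_smul, ip_smul_left, ip_smul_right]; ring
  have e4 : ip (Vᵀ * (V * D)) D = frobSq (V * D) := by
    rw [ip_transpose_mul, frobSq_eq_ip]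
  have h5 : frobSq (Vᵀ * (V * D)) ≤ s ^ 2 * frobSq (V * D) := frobSq_transpose_mul_le V _
  have h6 : frobSq (V * D) ≤ s ^ 2 * frobSq D := frobSq_mul_le V D
  have ha : (0:ℝ) ≤ frobSq D := frobSq_nonneg D
  have hv : (0:ℝ) ≤ frobSq (V * D) := frobSq_nonneg _
  have h7 : frobSq A ≤ (τ * s ^ 2 + γ) * ip D A := by
    rw [e3, e4, e2]
    nlinarith [mul_le_mul_of_nonneg_left h5 (sq_nonneg τ),
      mul_le_mul_of_nonneg_left h6 (by positivity : (0:ℝ) ≤ τ * γ)]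
  have h8 : γ * frobSq D ≤ ip D A := by
    rw [e2]; nlinarith [mul_nonneg hτ.le hv]
  have hb : (0:ℝ) ≤ β * (2 - β * (τ * s ^ 2 + γ)) := by nlinarith
  rw [e1]
  nlinarith [mul_le_mul_of_nonneg_left h7 (sq_nonneg β), mul_le_mul_of_nonneg_left h8 hb]

/-! ### Row structure of the prox -/

lemma frobSq_updateRow (M : Matrix (Fin m) (Fin n) ℝ) (s : Fin m) (v : Fin n → ℝ) :
    frobSq (M.updateRow s v) = frobSq M - (∑ j, (M s j) ^ 2) + ∑ j, (v j) ^ 2 := by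
  classical
  have h : ∀ i, (∑ j, (M.updateRow s v i j) ^ 2)
      = Function.update (fun i => ∑ j, (M i j) ^ 2) s (∑ j, (v j) ^ 2) i := by
    intro i
    by_cases hi : i = s
    · subst hi; simp
    · simp [Matrix.updateRow_ne hi, Function.update_of_ne hi]
  have h2 : frobSq (M.updateRow s v)
      = ∑ i, Function.update (fun i => ∑ j, (M i j) ^ 2) s (∑ j, (v j) ^ 2) i :=
    Finset.sum_congr rfl fun i _ => h i
  rw [h2, Finset.sum_update_of_mem (Finset.mem_univ s),
    Finset.sum_sdiff_eq_sub (Finset.subset_univ {s}), Finset.sum_singleton]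
  rw [frobSq]
  ring

lemma frobSq_updateRow_sub (W H : Matrix (Fin m) (Fin n) ℝ) (s : Fin m) (v : Fin n → ℝ) :
    frobSq (W.updateRow s v - H)
      = frobSq (W - H) - (∑ j, (W s j - H s j) ^ 2) + ∑ j, (v j - H s j) ^ 2 := by
  have e : W.updateRow s v - H = (W - H).updateRow s (v - H s) := by
    ext i j
    by_cases hi : i = s
    · subst hi; simp [Matrix.updateRow_self]
    · simp [Matrix.updateRow_ne hi]
  rw [e, frobSq_updateRow]
  simp [Matrix.sub_apply]

lemma norm02_nonneg (W : Matrix (Fin m) (Fin n) ℝ) : 0 ≤ norm02 W := Nat.cast_nonneg _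

lemma norm02_updateRow_le (W : Matrix (Fin m) (Fin n) ℝ) (s : Fin m) (v : Fin n → ℝ)
    (hs : W s ≠ 0) : norm02 (W.updateRow s v) ≤ norm02 W := by
  apply Nat.cast_le.mpr
  apply Finset.card_le_card
  intro t ht
  simp only [Finset.mem_filter, Finset.mem_univ, true_and] at *
  by_cases h : t = s
  · subst h; exact hs
  · rwa [Matrix.updateRow_ne h] at ht

open Classical in
lemma norm02_updateRow_zero (W : Matrix (Fin m) (Fin n) ℝ) (s : Fin m) (hs : W s ≠ 0) :
    norm02 (W.updateRow s (0 : Fin n → ℝ)) = norm02 W - 1 := by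
  have hmem : s ∈ Finset.univ.filter (fun t => W t ≠ 0) := by simp [hs]
  have e : Finset.univ.filter (fun t => W.updateRow s 0 t ≠ 0)
      = (Finset.univ.filter fun t => W t ≠ 0).erase s := by
    ext t
    simp only [Finset.mem_filter, Finset.mem_erase, Finset.mem_univ, true_and]
    by_cases h : t = s
    · subst h; simp [Matrix.updateRow_self]
    · simp [Matrix.updateRow_ne h, h]
  rw [norm02, e, Finset.card_erase_of_mem hmem, Nat.cast_sub (Finset.card_pos.mpr ⟨s, hmem⟩)]
  simp [norm02]

lemma prox_rows {β lam : ℝ} (hβ : 0 < β) (hlam : 0 < lam)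
    (W H : Matrix (Fin m) (Fin n) ℝ)
    (hW : ∀ Z, lam * norm02 W + (1/(2*β)) * frobSq (W - H)
        ≤ lam * norm02 Z + (1/(2*β)) * frobSq (Z - H))
    (s : Fin m) (hs : W s ≠ 0) :
    W s = H s ∧ 2*β*lam ≤ ∑ j, (W s j)^2 := by
  have hc : (0:ℝ) < 1/(2*β) := by positivity
  -- Claim 1 : the nonzero row equals the corresponding row of H
  have h1 := hW (W.updateRow s (H s))
  rw [frobSq_updateRow_sub] at h1
  have hz : (∑ j, (H s j - H s j)^2) = 0 := by simp
  rw [hz, add_zero] at h1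
  have hle : lam * norm02 (W.updateRow s (H s)) ≤ lam * norm02 W :=
    mul_le_mul_of_nonneg_left (norm02_updateRow_le W s (H s) hs) hlam.le
  have hrs0 : (0:ℝ) ≤ ∑ j, (W s j - H s j)^2 := Finset.sum_nonneg fun _ _ => sq_nonneg _
  have hrs : (∑ j, (W s j - H s j)^2) = 0 := by nlinarith [h1, hle, hc, hrs0]
  have hWs : W s = H s := by
    funext j
    have hj : (W s j - H s j)^2 = 0 :=
      (Finset.sum_eq_zero_iff_of_nonneg (fun j _ => sq_nonneg _)).mp hrs j (Finset.mem_univ j)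
    have := pow_eq_zero_iff (n := 2) (by norm_num) |>.mp hj
    linarith [sub_eq_zero.mp this]
  refine ⟨hWs, ?_⟩
  -- Claim 2 : the row must have norm² at least 2βλ
  have h2 := hW (W.updateRow s (0 : Fin n → ℝ))
  rw [frobSq_updateRow_sub, hrs, norm02_updateRow_zero W s hs] at h2
  have hz2 : (∑ j, ((0 : Fin n → ℝ) j - H s j)^2) = ∑ j, (W s j)^2 := by
    rw [hWs]
    exact Finset.sum_congr rfl fun j _ => by simp [neg_sq]
  rw [hz2] at h2
  have h2b : 2*β*(1/(2*β)) = 1 := by field_simp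
  nlinarith [h2, hlam, hc]

lemma psi_nonneg (τ γ : ℝ) (hτ : 0 < τ) (hγ : 0 < γ) (U : Matrix (Fin p) (Fin n) ℝ)
    (V : Matrix (Fin p) (Fin m) ℝ) (W : Matrix (Fin m) (Fin n) ℝ) : 0 ≤ Psi τ γ U V W := by
  have h1 := frobSq_nonneg (U - V * W)
  have h2 := frobSq_nonneg W
  rw [Psi]
  positivity

lemma rowSq_le_frobSq (M : Matrix (Fin m) (Fin n) ℝ) (s : Fin m) :
    (∑ j, (M s j)^2) ≤ frobSq M :=
  Finset.single_le_sum (f := fun i => ∑ j, (M i j)^2)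
    (fun i _ => Finset.sum_nonneg fun j _ => sq_nonneg _) (Finset.mem_univ s)

lemma continuous_frobSq : Continuous (frobSq : Matrix (Fin m) (Fin n) ℝ → ℝ) :=
  continuous_finset_sum _ fun i _ => continuous_finset_sum _ fun j _ =>
    (continuous_id.matrix_elem i j).pow 2

lemma continuous_rowSq (s : Fin m) :
    Continuous (fun X : Matrix (Fin m) (Fin n) ℝ => ∑ j, (X s j)^2) :=
  continuous_finset_sum _ fun j _ => (continuous_id.matrix_elem s j).pow 2

lemma continuous_Hmap (τ γ β : ℝ) (U : Matrix (Fin p) (Fin n) ℝ)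
    (V : Matrix (Fin p) (Fin m) ℝ) :
    Continuous (fun X : Matrix (Fin m) (Fin n) ℝ => X - β • gradPsi τ γ U V X) := by
  have hg : Continuous (fun X : Matrix (Fin m) (Fin n) ℝ => gradPsi τ γ U V X) := by
    apply Continuous.add
    · exact (Continuous.matrix_mul continuous_const
        ((Continuous.matrix_mul continuous_const continuous_id).sub continuous_const)).const_smul τ
    · exact continuous_id.const_smul γ
  exact continuous_id.sub (hg.const_smul β)

lemma sqrt_pow' (x : ℝ) (hx : 0 ≤ x) : ∀ j : ℕ, Real.sqrt (x ^ j) = (Real.sqrt x) ^ j := by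
  intro j
  induction j with
  | zero => simp
  | succ j ih => rw [pow_succ, pow_succ, Real.sqrt_mul (pow_nonneg hx j), ih]

end PGMaux

/-- for `β ∈ (0, 1/(τ‖V‖₂² + γ))`, any sequence generated by the
proximal gradient iteration `W^{ℓ+1} ∈ Prox_{βλ‖·‖_{0,2}}(W^ℓ − β∇Ψ(W^ℓ))` converges
(as a whole sequence) to a P-stationary point of `min_W Ψ(W) + λ‖W‖_{0,2}`. -/
theorem PGM_whole_sequence_convergence
    (p m n : ℕ) (τ γ lam β : ℝ) (hτ : 0 < τ) (hγ : 0 < γ) (hlam : 0 < lam)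
    (U : Matrix (Fin p) (Fin n) ℝ) (V : Matrix (Fin p) (Fin m) ℝ)
    (hβ0 : 0 < β) (hβ1 : β < 1 / (τ * specNorm V ^ 2 + γ))
    (Wseq : ℕ → Matrix (Fin m) (Fin n) ℝ)
    (hiter : ∀ ℓ : ℕ, Wseq (ℓ + 1) ∈ ProxSet β (fun W => lam * norm02 W)
        (Wseq ℓ - β • gradPsi τ γ U V (Wseq ℓ))) :
    ∃ Wstar : Matrix (Fin m) (Fin n) ℝ,
      Tendsto Wseq atTop (𝓝 Wstar) ∧
      Wstar ∈ ProxSet β (fun W => lam * norm02 W)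
        (Wstar - β • gradPsi τ γ U V Wstar) := by
  classical
  open PGMaux in
  -- abbreviations
  set L : ℝ := τ * specNorm V ^ 2 + γ with hLdef
  have hs0 : (0:ℝ) ≤ specNorm V := specNorm_nonneg V
  have hL : 0 < L := by positivity
  have hβL : β * L < 1 := by
    have := (lt_div_iff₀ hL).mp hβ1
    linarith
  set Hm : Matrix (Fin m) (Fin n) ℝ → Matrix (Fin m) (Fin n) ℝ :=
    fun X => X - β • gradPsi τ γ U V X with hHmdef
  set d : ℕ → ℝ := fun k => frobSq (Wseq (k+1) - Wseq k) with hddef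
  set F : ℕ → ℝ := fun k => Psi τ γ U V (Wseq k) + lam * norm02 (Wseq k) with hFdef
  set cst : ℝ := 1/(2*β) - L/2 with hcstdef
  have hcst : 0 < cst := by
    rw [hcstdef]
    have h1 : L < 1/β := by rw [lt_div_iff₀ hβ0]; linarith [hβL]
    have h2 : 1/(2*β) = (1/β)/2 := by ring
    linarith
  -- sufficient decrease
  have suffdec : ∀ k, F (k+1) + cst * d k ≤ F k := by
    intro k
    have e1 : Wseq (k+1) - (Wseq k - β • gradPsi τ γ U V (Wseq k))
        = (Wseq (k+1) - Wseq k) + β • gradPsi τ γ U V (Wseq k) := by abel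
    have e2 : Wseq k - (Wseq k - β • gradPsi τ γ U V (Wseq k))
        = β • gradPsi τ γ U V (Wseq k) := by abel
    have hZ2 := hiter k (Wseq k)
    dsimp only at hZ2
    rw [e1, e2, frobSq_add, frobSq_smul, ip_smul_right] at hZ2
    have hexp : Psi τ γ U V (Wseq (k+1)) = Psi τ γ U V (Wseq k)
        + ip (gradPsi τ γ U V (Wseq k)) (Wseq (k+1) - Wseq k)
        + (1/2) * (τ * frobSq (V * (Wseq (k+1) - Wseq k)) + γ * frobSq (Wseq (k+1) - Wseq k)) := by
      have := psi_expand τ γ U V (Wseq k) (Wseq (k+1) - Wseq k)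
      rwa [add_sub_cancel] at this
    have hVD : τ * frobSq (V * (Wseq (k+1) - Wseq k))
        ≤ τ * (specNorm V ^ 2 * frobSq (Wseq (k+1) - Wseq k)) :=
      mul_le_mul_of_nonneg_left (frobSq_mul_le V _) hτ.le
    have hipc : ip (gradPsi τ γ U V (Wseq k)) (Wseq (k+1) - Wseq k)
        = ip (Wseq (k+1) - Wseq k) (gradPsi τ γ U V (Wseq k)) := ip_comm _ _
    have key : (1/(2*β)) * (frobSq (Wseq (k+1) - Wseq k)
          + 2 * (β * ip (Wseq (k+1) - Wseq k) (gradPsi τ γ U V (Wseq k)))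
          + β^2 * frobSq (gradPsi τ γ U V (Wseq k)))
        = (1/(2*β)) * frobSq (Wseq (k+1) - Wseq k)
          + ip (Wseq (k+1) - Wseq k) (gradPsi τ γ U V (Wseq k))
          + (1/(2*β)) * (β^2 * frobSq (gradPsi τ γ U V (Wseq k))) := by
      field_simp
    simp only [hFdef, hddef, hcstdef, hLdef]
    have step1 : lam * norm02 (Wseq (k+1)) + 1/(2*β) * frobSq (Wseq (k+1) - Wseq k)
        + ip (Wseq (k+1) - Wseq k) (gradPsi τ γ U V (Wseq k)) ≤ lam * norm02 (Wseq k) := by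
      linarith [hZ2, key]
    linarith [step1, hexp, hVD, hipc]
  -- F is nonnegative, partial sums of d are bounded, d tends to 0
  have hF0 : ∀ k, 0 ≤ F k := fun k =>
    add_nonneg (psi_nonneg τ γ hτ hγ U V _) (mul_nonneg hlam.le (norm02_nonneg _))
  have htel : ∀ K, cst * (∑ k ∈ Finset.range K, d k) + F K ≤ F 0 := by
    intro K
    induction K with
    | zero => simp
    | succ K ih =>
      rw [Finset.sum_range_succ, mul_add]
      have := suffdec K
      linarith
  have hdsum : Summable d := by
    apply summable_of_sum_range_le (c := F 0 / cst) (fun k => frobSq_nonneg _)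
    intro K
    rw [le_div_iff₀ hcst]
    have := htel K
    have := hF0 K
    linarith [mul_comm cst (∑ k ∈ Finset.range K, d k)]
  have htend0 : Tendsto d atTop (𝓝 0) := hdsum.tendsto_atTop_zero
  -- eventually d k < 2βλ
  have hev : ∀ᶠ k in atTop, d k < 2*β*lam :=
    htend0.eventually (gt_mem_nhds (by positivity))
  obtain ⟨N, hN⟩ := eventually_atTop.mp hev
  -- row structure of iterates
  have hrow : ∀ k (t : Fin m), Wseq (k+1) t ≠ 0 →
      Wseq (k+1) t = Hm (Wseq k) t ∧ 2*β*lam ≤ ∑ j, (Wseq (k+1) t j)^2 := by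
    intro k t ht
    exact prox_rows hβ0 hlam (Wseq (k+1)) (Hm (Wseq k)) (hiter k) t ht
  -- support stabilization
  have hstab : ∀ k, N + 1 ≤ k → ∀ t : Fin m, (Wseq k t ≠ 0 ↔ Wseq (k+1) t ≠ 0) := by
    intro k hk t
    obtain ⟨k', rfl⟩ : ∃ k', k = k' + 1 := ⟨k - 1, by omega⟩
    have hk' : N ≤ k' := by omega
    constructor
    · intro h1
      by_contra h2
      have h2' : Wseq (k'+2) t = 0 := h2
      have hrq := (hrow k' t h1).2
      have hsum : (∑ j, ((Wseq (k'+2) - Wseq (k'+1)) t j)^2) = ∑ j, (Wseq (k'+1) t j)^2 := by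
        refine Finset.sum_congr rfl fun j _ => ?_
        rw [Matrix.sub_apply]
        rw [show Wseq (k'+2) t j = 0 from congrFun h2' j]
        ring
      have hle := rowSq_le_frobSq (Wseq (k'+2) - Wseq (k'+1)) t
      have hlt := hN (k'+1) (by omega)
      simp only [hddef] at hlt
      rw [hsum] at hle
      linarith
    · intro h2
      by_contra h1
      have h1' : Wseq (k'+1) t = 0 := h1
      have hrq := (hrow (k'+1) t h2).2
      have hsum : (∑ j, ((Wseq (k'+2) - Wseq (k'+1)) t j)^2) = ∑ j, (Wseq (k'+2) t j)^2 := by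
        refine Finset.sum_congr rfl fun j _ => ?_
        rw [Matrix.sub_apply]
        rw [show Wseq (k'+1) t j = 0 from congrFun h1' j]
        ring
      have hle := rowSq_le_frobSq (Wseq (k'+2) - Wseq (k'+1)) t
      have hlt := hN (k'+1) (by omega)
      simp only [hddef] at hlt
      rw [hsum] at hle
      linarith
  have hstabAll : ∀ k, N + 1 ≤ k → ∀ t : Fin m, (Wseq k t ≠ 0 ↔ Wseq (N+1) t ≠ 0) := by
    intro k hk
    induction k, hk using Nat.le_induction with
    | base => exact fun t => Iff.rfl
    | succ k hk ih => exact fun t => ((hstab k hk t).symm.trans (ih t))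
  -- the fixed-support proximal-gradient map
  set Φ : Matrix (Fin m) (Fin n) ℝ → Matrix (Fin m) (Fin n) ℝ :=
    fun X => Matrix.of fun t j => if Wseq (N+1) t ≠ 0 then Hm X t j else 0 with hΦdef
  have hΦeq : ∀ k, N + 1 ≤ k → Wseq (k+1) = Φ (Wseq k) := by
    intro k hk
    ext t j
    simp only [hΦdef, Matrix.of_apply]
    by_cases hc : Wseq (N+1) t ≠ 0
    · have h1 : Wseq (k+1) t ≠ 0 := (hstabAll (k+1) (by omega) t).mpr hc
      rw [if_pos hc]
      exact congrFun (hrow k t h1).1 j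
    · have h1 : Wseq (k+1) t = 0 :=
        not_not.mp (fun h => hc ((hstabAll (k+1) (by omega) t).mp h))
      rw [if_neg hc]
      exact congrFun h1 j
  -- contraction
  set q2 : ℝ := 1 - β * γ * (2 - β * L) with hq2def
  have hq2_0 : 0 ≤ q2 := by
    have h1 : (0:ℝ) ≤ β * (2 - β * L) * (τ * specNorm V ^ 2) := by
      have : (0:ℝ) ≤ 2 - β * L := by linarith
      positivity
    nlinarith [sq_nonneg (1 - β * L)]
  have hq2_1 : q2 < 1 := by
    have h2 : (0:ℝ) < 2 - β * L := by linarith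
    nlinarith [mul_pos (mul_pos hβ0 hγ) h2]
  have hcontr : ∀ X Y, frobSq (Φ X - Φ Y) ≤ q2 * frobSq (X - Y) := by
    intro X Y
    have step1 : frobSq (Φ X - Φ Y) ≤ frobSq (Hm X - Hm Y) := by
      rw [frobSq, frobSq]
      refine Finset.sum_le_sum fun t _ => Finset.sum_le_sum fun j _ => ?_
      simp only [hΦdef, Matrix.sub_apply, Matrix.of_apply]
      by_cases hc : Wseq (N+1) t ≠ 0
      · rw [if_pos hc, if_pos hc]
      · rw [if_neg hc, if_neg hc]
        simpa using sq_nonneg ((Hm X - Hm Y) t j)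
    have step2 : Hm X - Hm Y = (X - Y) - β • (τ • (Vᵀ * (V * (X - Y))) + γ • (X - Y)) := by
      have e : Hm X - Hm Y = (X - Y) - β • (gradPsi τ γ U V X - gradPsi τ γ U V Y) := by
        simp only [hHmdef, smul_sub]; abel
      rw [e, grad_sub]
    calc frobSq (Φ X - Φ Y) ≤ frobSq (Hm X - Hm Y) := step1
      _ ≤ q2 * frobSq (X - Y) := by
          rw [step2, hq2def, hLdef]
          exact contraction τ γ β hτ hγ hβ0 V (by rw [← hLdef]; exact hβL) (X - Y)
  -- the tail sequence and its geometric convergence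
  set u : ℕ → Matrix (Fin m) (Fin n) ℝ := fun j => Wseq (N+1+j) with hudef
  have hu : ∀ j, u (j+1) = Φ (u j) := by
    intro j
    have : N + 1 + (j + 1) = (N + 1 + j) + 1 := by omega
    simp only [hudef, this]
    exact hΦeq (N+1+j) (by omega)
  have hgeo : ∀ j, frobSq (u j - u (j+1)) ≤ q2 ^ j * frobSq (u 0 - u 1) := by
    intro j
    induction j with
    | zero => simp
    | succ j ih =>
      have h1 : frobSq (u (j+1) - u (j+2)) ≤ q2 * frobSq (u j - u (j+1)) := by
        have hcc := hcontr (u j) (u (j+1))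
        rw [← hu j, ← hu (j+1)] at hcc
        exact hcc
      calc frobSq (u (j+1) - u (j+2)) ≤ q2 * frobSq (u j - u (j+1)) := h1
        _ ≤ q2 * (q2 ^ j * frobSq (u 0 - u 1)) := mul_le_mul_of_nonneg_left ih hq2_0
        _ = q2 ^ (j+1) * frobSq (u 0 - u 1) := by ring
  -- transfer to Euclidean space to get convergence
  set emb : Matrix (Fin m) (Fin n) ℝ → EuclideanSpace ℝ (Fin m × Fin n) :=
    fun X => (WithLp.equiv 2 ((Fin m × Fin n) → ℝ)).symm (fun q => X q.1 q.2) with hembdef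
  have hdist : ∀ X Y : Matrix (Fin m) (Fin n) ℝ,
      dist (emb X) (emb Y) = Real.sqrt (frobSq (X - Y)) := by
    intro X Y
    rw [EuclideanSpace.dist_eq]
    congr 1
    rw [frobSq, Fintype.sum_prod_type]
    refine Finset.sum_congr rfl fun i _ => Finset.sum_congr rfl fun j _ => ?_
    simp only [hembdef, WithLp.equiv_symm_apply, WithLp.ofLp_toLp, Real.dist_eq, Matrix.sub_apply]
    rw [sq_abs]
  set v : ℕ → EuclideanSpace ℝ (Fin m × Fin n) := fun j => emb (u j) with hvdef
  have hcau : CauchySeq v := by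
    apply cauchySeq_of_le_geometric (Real.sqrt q2) (Real.sqrt (frobSq (u 0 - u 1)))
      ((Real.sqrt_lt' one_pos).mpr (by simpa using hq2_1))
    intro j
    rw [hvdef]
    simp only
    rw [hdist]
    calc Real.sqrt (frobSq (u j - u (j+1)))
        ≤ Real.sqrt (q2 ^ j * frobSq (u 0 - u 1)) := Real.sqrt_le_sqrt (hgeo j)
      _ = Real.sqrt q2 ^ j * Real.sqrt (frobSq (u 0 - u 1)) := by
          rw [Real.sqrt_mul (pow_nonneg hq2_0 j), sqrt_pow' q2 hq2_0 j]
      _ = Real.sqrt (frobSq (u 0 - u 1)) * Real.sqrt q2 ^ j := mul_comm _ _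
  obtain ⟨xlim, hx⟩ := cauchySeq_tendsto_of_complete hcau
  set Wstar : Matrix (Fin m) (Fin n) ℝ := Matrix.of fun i j => xlim (i, j) with hWstardef
  have hentry : ∀ (i : Fin m) (j : Fin n),
      Tendsto (fun k => u k i j) atTop (𝓝 (Wstar i j)) := by
    intro i j
    have hcont : Continuous fun x : EuclideanSpace ℝ (Fin m × Fin n) => x (i, j) :=
      (continuous_apply ((i, j) : Fin m × Fin n)).comp
        (PiLp.continuousLinearEquiv 2 ℝ (fun _ : Fin m × Fin n => ℝ)).continuous
    have := (hcont.tendsto xlim).comp hx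
    exact this
  have hWtend_u : Tendsto u atTop (𝓝 Wstar) := by
    refine tendsto_pi_nhds.mpr ?_
    intro i
    rw [tendsto_pi_nhds]
    intro j
    exact hentry i j
  have hWtend : Tendsto Wseq atTop (𝓝 Wstar) := by
    have h1 : (fun j => Wseq (j + (N+1))) = u := by
      funext j; simp only [hudef]; exact congrArg Wseq (Nat.add_comm j (N+1))
    rw [← tendsto_add_atTop_iff_nat (N+1), h1]
    exact hWtend_u
  refine ⟨Wstar, hWtend, ?_⟩
  -- support of the limit
  have hWseq1 : Tendsto (fun k => Wseq (k+1)) atTop (𝓝 Wstar) :=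
    hWtend.comp (tendsto_add_atTop_nat 1)
  have hsupp : ∀ t : Fin m, (Wstar t ≠ 0 ↔ Wseq (N+1) t ≠ 0) := by
    intro t
    constructor
    · intro h
      by_contra hc
      have hz : ∀ k, u k t = 0 := by
        intro k
        by_contra hh
        exact (hstabAll (N+1+k) (by omega) t).mp hh hc
      have : Wstar t = 0 := by
        funext j
        have h1 : Tendsto (fun k => u k t j) atTop (𝓝 (Wstar t j)) := hentry t j
        have h2 : (fun k => u k t j) = fun _ => (0:ℝ) := by
          funext k; exact congrFun (hz k) j
        rw [h2] at h1
        exact (tendsto_nhds_unique h1 tendsto_const_nhds)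
      exact h this
    · intro hc
      have hge : ∀ k, 2*β*lam ≤ ∑ j, (u k t j)^2 := by
        intro k
        have hne : Wseq (N+1+k) t ≠ 0 := (hstabAll (N+1+k) (by omega) t).mpr hc
        obtain ⟨k', hk'⟩ : ∃ k', N+1+k = k' + 1 := ⟨N+k, by omega⟩
        rw [hk'] at hne
        have h3 := (hrow k' t hne).2
        simp only [hudef]
        rw [hk']
        exact h3
      have hlim : Tendsto (fun k => ∑ j, (u k t j)^2) atTop (𝓝 (∑ j, (Wstar t j)^2)) :=
        ((continuous_rowSq t).tendsto Wstar).comp hWtend_u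
      have h2 : 2*β*lam ≤ ∑ j, (Wstar t j)^2 :=
        ge_of_tendsto hlim (Filter.Eventually.of_forall hge)
      intro h0
      rw [h0] at h2
      simp only [Pi.zero_apply] at h2
      have : (0:ℝ) < 2*β*lam := by positivity
      simp at h2
      linarith
  have hn02 : ∀ k, N + 1 ≤ k → norm02 (Wseq k) = norm02 Wstar := by
    intro k hk
    have : (Finset.univ.filter fun t : Fin m => Wseq k t ≠ 0)
        = Finset.univ.filter fun t : Fin m => Wstar t ≠ 0 :=
      Finset.filter_congr fun t _ => (hstabAll k hk t).trans (hsupp t).symm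
    rw [norm02, norm02, this]
  -- pass the prox inequality to the limit
  intro Z
  have hHcont := continuous_Hmap τ γ β U V
  have hHm_tend : Tendsto (fun k => Hm (Wseq k)) atTop (𝓝 (Hm Wstar)) :=
    (hHcont.tendsto Wstar).comp hWtend
  have hq_tend : Tendsto (fun k => frobSq (Wseq (k+1) - Hm (Wseq k))) atTop
      (𝓝 (frobSq (Wstar - Hm Wstar))) :=
    (continuous_frobSq.tendsto _).comp (hWseq1.sub hHm_tend)
  have hr_tend : Tendsto (fun k => frobSq (Z - Hm (Wseq k))) atTop
      (𝓝 (frobSq (Z - Hm Wstar))) :=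
    (continuous_frobSq.tendsto _).comp (tendsto_const_nhds.sub hHm_tend)
  have hA' : Tendsto (fun k => lam * norm02 Wstar
      + (1/(2*β)) * frobSq (Wseq (k+1) - Hm (Wseq k))) atTop
      (𝓝 (lam * norm02 Wstar + (1/(2*β)) * frobSq (Wstar - Hm Wstar))) :=
    tendsto_const_nhds.add (hq_tend.const_mul _)
  have hA : Tendsto (fun k => lam * norm02 (Wseq (k+1))
      + (1/(2*β)) * frobSq (Wseq (k+1) - Hm (Wseq k))) atTop
      (𝓝 (lam * norm02 Wstar + (1/(2*β)) * frobSq (Wstar - Hm Wstar))) := by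
    apply hA'.congr'
    filter_upwards [eventually_ge_atTop N] with k hk
    rw [hn02 (k+1) (by omega)]
  have hB : Tendsto (fun k => lam * norm02 Z
      + (1/(2*β)) * frobSq (Z - Hm (Wseq k))) atTop
      (𝓝 (lam * norm02 Z + (1/(2*β)) * frobSq (Z - Hm Wstar))) :=
    tendsto_const_nhds.add (hr_tend.const_mul _)
  exact le_of_tendsto_of_tendsto' hA hB (fun k => hiter k Z)
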